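/- arXiv:1303.3980 — 2 statements merged into one kernel-verified Lean document; each statement's English description precedes it below -/
import Mathlib

section
/- Let k ≥ 1 and let a_j > 0, q_j < 1, η_j > 0, ζ_j > −1 be real numbers for j = 1,…,k. Let φ be the product of independent pathway densities, φ(x) = ∏_{j=1}^k c_j x_j^{ζ_j}[1 − a_j(1−q_j)x_j]^{η_j/(1−q_j)} for 0 < x_j < 1/(a_j(1−q_j)) (0 elsewhere), where c_j = [a_j(1−q_j)]^{ζ_j+1} Γ(ζ_j + η_j/(1−q_j) + 2)/(Γ(ζ_j+1) Γ(η_j/(1−q_j) + 1)). Let f : ℝ^k → [0,∞) be a measurable probability density vanishing outside (0,∞)^k. Then the pushforward of (volume.withDensity φ) ⊗ (volume.withDensity f) under the map (x, v) ↦ (x_1 v_1,…,x_k v_k) equals volume.withDensity g, where for u ∈ (0,∞)^k, g(u) = (∏_{j=1}^k c_j u_j^{ζ_j}) · ∫_{v_1 > a_1(1−q_1)u_1} ⋯ ∫_{v_k > a_k(1−q_k)u_k} (∏_{j=1}^k v_j^{−ζ_j − η_j/(1−q_j) − 1} [v_j − a_j(1−q_j)u_j]^{η_j/(1−q_j)})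 f(v_1,…,v_k) dv_1⋯dv_k. -/
open MeasureTheory Real Set
open scoped ENNReal

lemma my_measurable_rpow_const (p : ℝ) : Measurable fun x : ℝ => x ^ p := by
  have h1 : Measurable fun x : ℝ => Real.exp (Real.log x * p) :=
    Real.measurable_exp.comp (Real.measurable_log.mul_const p)
  have h : (fun x : ℝ => x ^ p) = fun x =>
      if x < 0 then Real.exp (Real.log x * p) * Real.cos (p * π)
      else if x = 0 then (if p = 0 then 1 else 0) else Real.exp (Real.log x * p) := by
    funext x
    rcases lt_trichotomy x 0 with hx | hx | hx
    · simp [hx, Real.rpow_def_of_neg hx]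
    · subst hx
      simp only [lt_irrefl, if_false, if_pos rfl]
      by_cases hp : p = 0
      · simp [hp]
      · simp [hp, Real.zero_rpow hp]
    · rw [if_neg (not_lt.mpr hx.le), if_neg hx.ne', Real.rpow_def_of_pos hx]
  rw [h]
  exact Measurable.ite measurableSet_Iio (h1.mul_const _)
    (Measurable.ite (MeasurableSet.singleton 0) measurable_const h1)

lemma my_lintegral_pi_prod : ∀ {n : ℕ} (φ : Fin n → ℝ → ℝ≥0∞), (∀ j, Measurable (φ j)) →
    ∫⁻ x : Fin n → ℝ, ∏ j, φ j (x j) = ∏ j, ∫⁻ t : ℝ, φ j t := by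
  intro n
  induction n with
  | zero => intro φ _; simp [lintegral_const, volume_pi, Measure.pi_univ]
  | succ n ih =>
    intro φ hφ
    have A := ((measurePreserving_piFinSuccAbove (fun _ : Fin (n+1) => (volume : Measure ℝ)) 0).symm)
    rw [volume_pi, ← A.lintegral_comp_emb (MeasurableEquiv.measurableEmbedding _)]
    simp_rw [MeasurableEquiv.piFinSuccAbove_symm_apply, Fin.insertNthEquiv,
      Fin.prod_univ_succ, Fin.insertNth_zero]
    simp only [Fin.zero_succAbove, Function.comp_def, Fin.cons_zero, Fin.cons_succ,
      Equiv.coe_fn_mk, cast_eq]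
    have hg : Measurable fun z : Fin n → ℝ => ∏ x : Fin n, φ x.succ (z x) :=
      Finset.measurable_prod Finset.univ
        (fun (j : Fin n) _ => (hφ j.succ).comp (measurable_pi_apply j))
    rw [lintegral_prod_mul (f := φ 0) (g := fun z : Fin n → ℝ => ∏ x : Fin n, φ x.succ (z x))
      (hφ 0).aemeasurable hg.aemeasurable]
    rw [← volume_pi, ih (fun j => φ j.succ) (fun j => hφ j.succ)]

lemma my_lintegral_comp_scale {k : ℕ} (v : Fin k → ℝ) (hv : ∀ j, 0 < v j)
    {H : (Fin k → ℝ) → ℝ≥0∞} (hH : Measurable H) :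
    ∫⁻ x : Fin k → ℝ, H (fun j => v j * x j)
      = (∏ j, ENNReal.ofReal (v j))⁻¹ * ∫⁻ u, H u := by
  classical
  have hprod : 0 < ∏ j, v j := Finset.prod_pos fun j _ => hv j
  have hdet : (Matrix.diagonal v).det ≠ 0 := by
    rw [Matrix.det_diagonal]; exact hprod.ne'
  have hmap := Real.smul_map_diagonal_volume_pi (D := v) hdet
  have hLmeas : Measurable (Matrix.toLin' (Matrix.diagonal v)) :=
    (LinearMap.continuous_on_pi _).measurable
  have hc0 : ENNReal.ofReal |(Matrix.diagonal v).det| ≠ 0 := by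
    rw [Matrix.det_diagonal]
    exact (ENNReal.ofReal_pos.mpr (by rwa [abs_of_pos hprod])).ne'
  have hmap' : Measure.map (Matrix.toLin' (Matrix.diagonal v)) volume
      = (ENNReal.ofReal |(Matrix.diagonal v).det|)⁻¹ • volume := by
    have h2 : (ENNReal.ofReal |(Matrix.diagonal v).det|)⁻¹ •
        (ENNReal.ofReal |(Matrix.diagonal v).det| •
          Measure.map (Matrix.toLin' (Matrix.diagonal v)) volume)
        = (ENNReal.ofReal |(Matrix.diagonal v).det|)⁻¹ • volume := by rw [hmap]
    rwa [smul_smul, ENNReal.inv_mul_cancel hc0 ENNReal.ofReal_ne_top, one_smul] at h2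
  have hL : ∀ x : Fin k → ℝ, (Matrix.toLin' (Matrix.diagonal v)) x = fun j => v j * x j := by
    intro x; funext j
    simp [Matrix.toLin'_apply, Matrix.mulVec_diagonal]
  calc ∫⁻ x : Fin k → ℝ, H (fun j => v j * x j)
      = ∫⁻ x, H ((Matrix.toLin' (Matrix.diagonal v)) x) := by simp_rw [hL]
    _ = ∫⁻ u, H u ∂(Measure.map (Matrix.toLin' (Matrix.diagonal v)) volume) :=
        (lintegral_map hH hLmeas).symm
    _ = (ENNReal.ofReal |(Matrix.diagonal v).det|)⁻¹ * ∫⁻ u, H u := by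
        rw [hmap', lintegral_smul_measure, smul_eq_mul]
    _ = (∏ j, ENNReal.ofReal (v j))⁻¹ * ∫⁻ u, H u := by
        rw [Matrix.det_diagonal, abs_of_pos hprod,
          ENNReal.ofReal_prod_of_nonneg (fun j _ => (hv j).le)]

lemma my_aux_fin {A ζ E c : ℝ} (hA : 0 < A) (hζ : -1 < ζ) (hE : 0 ≤ E) :
    ∫⁻ t : ℝ, ENNReal.ofReal
      ((Set.Ioo (0:ℝ) (1/A)).indicator (fun t => c * (t ^ ζ * (1 - A*t) ^ E)) t) < ⊤ := by
  have hb : (0:ℝ) < 1/A := by positivity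
  have hint : IntegrableOn (fun t : ℝ => t ^ ζ) (Set.Ioo 0 (1/A)) := by
    have h1 := intervalIntegral.intervalIntegrable_rpow' (a := 0) (b := 1/A) hζ
    rw [intervalIntegrable_iff_integrableOn_Ioc_of_le hb.le] at h1
    exact h1.mono_set Set.Ioo_subset_Ioc_self
  have hint2 : Integrable ((Set.Ioo (0:ℝ) (1/A)).indicator (fun t => |c| * t ^ ζ)) := by
    rw [integrable_indicator_iff measurableSet_Ioo]
    exact (hint.const_mul _)
  calc ∫⁻ t : ℝ, ENNReal.ofReal
        ((Set.Ioo (0:ℝ) (1/A)).indicator (fun t => c * (t ^ ζ * (1 - A*t) ^ E)) t)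
      ≤ ∫⁻ t : ℝ, ENNReal.ofReal
        ((Set.Ioo (0:ℝ) (1/A)).indicator (fun t => |c| * t ^ ζ) t) := by
        apply lintegral_mono; intro t
        apply ENNReal.ofReal_le_ofReal
        by_cases ht : t ∈ Set.Ioo (0:ℝ) (1/A)
        · rw [Set.indicator_of_mem ht, Set.indicator_of_mem ht]
          have ht0 : (0:ℝ) < t := ht.1
          have hAt : A * t < 1 := by
            have := ht.2; rw [lt_div_iff₀ hA] at this; linarith [this]
          have h1At : 0 ≤ 1 - A * t := by linarith
          have h1At' : 1 - A * t ≤ 1 := by nlinarith [mul_pos hA ht0]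
          have hr : (1 - A*t) ^ E ≤ 1 := Real.rpow_le_one h1At h1At' hE
          have hrn : 0 ≤ (1 - A*t) ^ E := Real.rpow_nonneg h1At _
          have htζ : 0 ≤ t ^ ζ := Real.rpow_nonneg ht0.le _
          calc c * (t ^ ζ * (1 - A*t) ^ E) ≤ |c| * (t ^ ζ * (1 - A*t) ^ E) := by
                apply mul_le_mul_of_nonneg_right (le_abs_self c) (by positivity)
            _ ≤ |c| * (t ^ ζ * 1) := by
                apply mul_le_mul_of_nonneg_left _ (abs_nonneg c)
                exact mul_le_mul_of_nonneg_left hr htζ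
            _ = |c| * t ^ ζ := by ring
        · rw [Set.indicator_of_notMem ht, Set.indicator_of_notMem ht]
    _ ≤ ∫⁻ t : ℝ, ‖(Set.Ioo (0:ℝ) (1/A)).indicator (fun t => |c| * t ^ ζ) t‖ₑ :=
        lintegral_ofReal_le_lintegral_enorm _
    _ < ⊤ := hint2.2

lemma my_coord_eq {A E c ζ u v : ℝ} (hu : 0 < u) (hv : 0 < v) (huv : A * u < v) :
    c * ((u / v) ^ ζ * (1 - A * (u / v)) ^ E) * (v)⁻¹
      = (c * u ^ ζ) * (v ^ (-ζ - E - 1) * (v - A * u) ^ E) := by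
  have h2 : 1 - A * (u / v) = (v - A * u) / v := by field_simp
  have hvAu : (0:ℝ) ≤ v - A * u := by linarith
  rw [Real.div_rpow hu.le hv.le, h2, Real.div_rpow hvAu hv.le]
  have h4 : v ^ (-ζ - E - 1) = (v ^ ζ)⁻¹ * ((v ^ E)⁻¹ * v⁻¹) := by
    rw [show -ζ - E - 1 = -ζ + (-E + -1) by ring, Real.rpow_add hv, Real.rpow_add hv,
      Real.rpow_neg hv.le, Real.rpow_neg hv.le, Real.rpow_neg_one]
  rw [h4, div_eq_mul_inv, div_eq_mul_inv]
  ring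

lemma my_main_aux {k : ℕ} (A E c ζ : Fin k → ℝ) (hA : ∀ j, 0 < A j) (hE : ∀ j, 0 < E j)
    (hc : ∀ j, 0 < c j) (hζ : ∀ j, -1 < ζ j)
    (f : (Fin k → ℝ) → ℝ) (hf_meas : Measurable f) (hf_nonneg : ∀ x, 0 ≤ f x)
    (hf_supp : ∀ x, ¬ (∀ j, 0 < x j) → f x = 0)
    (hf_int : ∫⁻ x, ENNReal.ofReal (f x) = 1) :
    Measure.map (fun p : (Fin k → ℝ) × (Fin k → ℝ) => fun j => p.1 j * p.2 j)
      ((volume.withDensity (fun x => ENNReal.ofReal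
          (Set.indicator {x : Fin k → ℝ | ∀ j, 0 < x j ∧ x j < 1 / A j}
            (fun x => ∏ j, c j * (x j ^ ζ j * (1 - A j * x j) ^ E j)) x))).prod
        (volume.withDensity fun v => ENNReal.ofReal (f v)))
    = volume.withDensity fun u => ENNReal.ofReal
        (Set.indicator {u : Fin k → ℝ | ∀ j, 0 < u j}
          (fun u => (∏ j, c j * u j ^ ζ j) *
            ∫ v in {v : Fin k → ℝ | ∀ j, A j * u j < v j},
              (∏ j, v j ^ (-ζ j - E j - 1) * (v j - A j * u j) ^ E j) * f v) u) := by
  classical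
  set S : Set (Fin k → ℝ) := {x : Fin k → ℝ | ∀ j, 0 < x j ∧ x j < 1 / A j} with hS_def
  set φr : (Fin k → ℝ) → ℝ := fun x => ∏ j, c j * (x j ^ ζ j * (1 - A j * x j) ^ E j)
    with hφr_def
  set Φ : (Fin k → ℝ) → ℝ≥0∞ := fun x => ENNReal.ofReal (S.indicator φr x) with hΦ_def
  set fE : (Fin k → ℝ) → ℝ≥0∞ := fun v => ENNReal.ofReal (f v) with hfE_def
  set T : (Fin k → ℝ) × (Fin k → ℝ) → (Fin k → ℝ) := fun p => fun j => p.1 j * p.2 j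
    with hT_def
  -- measurability
  have hS_meas : MeasurableSet S := by
    have : S = ⋂ j, ((fun x : Fin k → ℝ => x j) ⁻¹' (Set.Ioo 0 (1/A j))) := by
      ext x; simp [hS_def, Set.mem_iInter, Set.mem_Ioo]
    rw [this]
    exact MeasurableSet.iInter fun j => measurable_pi_apply j measurableSet_Ioo
  have hφr_meas : Measurable φr := by
    apply Finset.measurable_prod
    intro j _
    exact measurable_const.mul
      (((my_measurable_rpow_const (ζ j)).comp (measurable_pi_apply j)).mul
        ((my_measurable_rpow_const (E j)).comp
          (measurable_const.sub (measurable_const.mul (measurable_pi_apply j)))))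
  have hΦ_meas : Measurable Φ := ENNReal.measurable_ofReal.comp (hφr_meas.indicator hS_meas)
  have hfE_meas : Measurable fE := ENNReal.measurable_ofReal.comp hf_meas
  have hT_meas : Measurable T := measurable_pi_lambda _ fun j =>
    ((measurable_pi_apply j).comp measurable_fst).mul ((measurable_pi_apply j).comp measurable_snd)
  have hfE_ne_top : ∀ v, fE v ≠ ∞ := fun v => ENNReal.ofReal_ne_top
  have hΦ_ne_top : ∀ x, Φ x ≠ ∞ := fun x => ENNReal.ofReal_ne_top
  -- finiteness of the pathway measure
  have hμ_fin : ∫⁻ x, Φ x < ⊤ := by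
    have hΦ_prod : ∀ x, Φ x = ∏ j, ENNReal.ofReal
        ((Set.Ioo (0:ℝ) (1/A j)).indicator
          (fun t => c j * (t ^ ζ j * (1 - A j * t) ^ E j)) (x j)) := by
      intro x
      by_cases hx : x ∈ S
      · have hmem : ∀ j, x j ∈ Set.Ioo (0:ℝ) (1/A j) := fun j => ⟨(hx j).1, (hx j).2⟩
        rw [hΦ_def]
        simp only
        rw [Set.indicator_of_mem hx, hφr_def]
        simp only
        rw [ENNReal.ofReal_prod_of_nonneg]
        · exact Finset.prod_congr rfl fun j _ => by rw [Set.indicator_of_mem (hmem j)]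
        · intro j _
          have h1 : (0:ℝ) < x j := (hx j).1
          have h2 : A j * x j < 1 := by
            have := (hx j).2; rw [lt_div_iff₀ (hA j)] at this; linarith
          have h3 : (0:ℝ) ≤ 1 - A j * x j := by linarith
          exact mul_nonneg (hc j).le
            (mul_nonneg (Real.rpow_nonneg h1.le _) (Real.rpow_nonneg h3 _))
      · rw [hΦ_def]
        simp only
        rw [Set.indicator_of_notMem hx, ENNReal.ofReal_zero]
        symm
        obtain ⟨j, hj⟩ := not_forall.mp hx
        refine Finset.prod_eq_zero (Finset.mem_univ j) ?_
        rw [Set.indicator_of_notMem (by simpa [Set.mem_Ioo] using hj), ENNReal.ofReal_zero]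
    calc ∫⁻ x, Φ x = ∏ j, ∫⁻ t : ℝ, ENNReal.ofReal
          ((Set.Ioo (0:ℝ) (1/A j)).indicator
            (fun t => c j * (t ^ ζ j * (1 - A j * t) ^ E j)) t) := by
          rw [lintegral_congr hΦ_prod]
          exact my_lintegral_pi_prod _ fun j => ENNReal.measurable_ofReal.comp
            ((measurable_const.mul
              ((my_measurable_rpow_const (ζ j)).mul
                ((my_measurable_rpow_const (E j)).comp
                  (measurable_const.sub (measurable_const.mul measurable_id))))).indicator
              measurableSet_Ioo)
      _ < ⊤ := ENNReal.prod_lt_top fun j _ =>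
          my_aux_fin (hA j) (hζ j) (hE j).le
  -- the intermediate density
  set K : (Fin k → ℝ) → ℝ≥0∞ := fun v => (∏ j, ENNReal.ofReal (v j))⁻¹ with hK_def
  set Ψ : (Fin k → ℝ) → (Fin k → ℝ) → ℝ≥0∞ := fun u v => Φ (fun j => u j / v j) with hΨ_def
  set gE : (Fin k → ℝ) → ℝ≥0∞ := fun u => ∫⁻ v, Ψ u v * (K v * fE v) with hgE_def
  have hK_meas : Measurable K :=
    (Finset.measurable_prod Finset.univ fun j _ =>
      ENNReal.measurable_ofReal.comp (measurable_pi_apply j)).inv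
  have hΨ_pair : Measurable fun p : (Fin k → ℝ) × (Fin k → ℝ) => Ψ p.1 p.2 :=
    hΦ_meas.comp (measurable_pi_lambda _ fun j =>
      ((measurable_pi_apply j).comp measurable_fst).div
        ((measurable_pi_apply j).comp measurable_snd))
  have hgE_meas : Measurable gE := by
    apply Measurable.lintegral_prod_right (f := fun u v => Ψ u v * (K v * fE v))
    exact hΨ_pair.mul ((hK_meas.comp measurable_snd).mul (hfE_meas.comp measurable_snd))
  have hKfE_ne_top : ∀ v, K v * fE v ≠ ∞ := by
    intro v
    by_cases hv : ∀ j, 0 < v j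
    · have hKv : K v ≠ ∞ := by
        rw [hK_def]
        simp only
        rw [← ENNReal.ofReal_prod_of_nonneg (fun j _ => (hv j).le)]
        exact ENNReal.inv_ne_top.mpr
          (ENNReal.ofReal_pos.mpr (Finset.prod_pos fun j _ => hv j)).ne'
      exact ENNReal.mul_ne_top hKv (hfE_ne_top v)
    · rw [hfE_def]
      simp only [hf_supp v hv, ENNReal.ofReal_zero, mul_zero]
      exact ENNReal.zero_ne_top
  -- the key identity
  have key : Measure.map T ((volume.withDensity Φ).prod (volume.withDensity fE))
      = volume.withDensity gE := by
    ext s hs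
    rw [Measure.map_apply hT_meas hs, withDensity_apply _ hs]
    have hIndm : Measurable fun p : (Fin k → ℝ) × (Fin k → ℝ) =>
        s.indicator (fun _ => (1:ℝ≥0∞)) (T p) := (measurable_const.indicator hs).comp hT_meas
    rw [← lintegral_indicator_one (hT_meas hs)]
    simp only [Pi.one_def]
    have hind_eq : ∀ p : (Fin k → ℝ) × (Fin k → ℝ),
        (T ⁻¹' s).indicator (fun _ => (1:ℝ≥0∞)) p
          = s.indicator (fun _ => (1:ℝ≥0∞)) (T p) := by
      intro p
      by_cases h : p ∈ T ⁻¹' s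
      · rw [Set.indicator_of_mem h, Set.indicator_of_mem (show T p ∈ s from h)]
      · rw [Set.indicator_of_notMem h, Set.indicator_of_notMem (show T p ∉ s from h)]
    rw [lintegral_congr hind_eq]
    rw [MeasureTheory.lintegral_prod _ hIndm.aemeasurable]
    have hOuter : Measurable fun x => ∫⁻ v, s.indicator (fun _ => (1:ℝ≥0∞)) (T (x, v))
        ∂(volume.withDensity fE) := by
      apply Measurable.lintegral_prod_right
        (f := fun x v => s.indicator (fun _ => (1:ℝ≥0∞)) (T (x, v)))
      exact hIndm
    rw [lintegral_withDensity_eq_lintegral_mul _ hΦ_meas hOuter]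
    simp only [Pi.mul_apply]
    have hInner : ∀ x, Φ x * ∫⁻ v, s.indicator (fun _ => (1:ℝ≥0∞)) (T (x, v))
          ∂(volume.withDensity fE)
        = ∫⁻ v, Φ x * (fE v * s.indicator (fun _ => (1:ℝ≥0∞)) (T (x, v))) := by
      intro x
      have hgx : Measurable fun v : Fin k → ℝ => s.indicator (fun _ => (1:ℝ≥0∞)) (T (x, v)) :=
        hIndm.comp measurable_prodMk_left
      rw [lintegral_withDensity_eq_lintegral_mul _ hfE_meas hgx]
      simp only [Pi.mul_apply]
      exact (lintegral_const_mul' _ _ (hΦ_ne_top x)).symm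
    rw [lintegral_congr hInner]
    have hm1 : Measurable (Function.uncurry fun x v =>
        Φ x * (fE v * s.indicator (fun _ => (1:ℝ≥0∞)) (T (x, v)))) :=
      (hΦ_meas.comp measurable_fst).mul ((hfE_meas.comp measurable_snd).mul hIndm)
    rw [lintegral_lintegral_swap hm1.aemeasurable]
    have hstep3 : ∀ v, ∫⁻ x, Φ x * (fE v * s.indicator (fun _ => (1:ℝ≥0∞)) (T (x, v)))
        = fE v * (K v * ∫⁻ u, s.indicator (fun _ => (1:ℝ≥0∞)) u * Ψ u v) := by
      intro v
      by_cases hv : ∀ j, 0 < v j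
      · have h1 : ∀ x, Φ x * (fE v * s.indicator (fun _ => (1:ℝ≥0∞)) (T (x, v)))
            = fE v * (Φ x * s.indicator (fun _ => (1:ℝ≥0∞)) (T (x, v))) := fun x => by ring
        rw [lintegral_congr h1, lintegral_const_mul' _ _ (hfE_ne_top v)]
        congr 1
        have hH : Measurable fun u : Fin k → ℝ =>
            s.indicator (fun _ => (1:ℝ≥0∞)) u * Ψ u v := by
          apply (measurable_const.indicator hs).mul
          exact hΦ_meas.comp (measurable_pi_lambda _ fun j =>
            (measurable_pi_apply j).div_const _)
        have h2 : ∀ x, Φ x * s.indicator (fun _ => (1:ℝ≥0∞)) (T (x, v))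
            = (fun u => s.indicator (fun _ => (1:ℝ≥0∞)) u * Ψ u v) (fun j => v j * x j) := by
          intro x
          have e1 : (fun j => (v j * x j) / v j) = x := by
            funext j; exact mul_div_cancel_left₀ _ (hv j).ne'
          have e2 : T (x, v) = fun j => v j * x j := by
            funext j; exact mul_comm _ _
          show Φ x * s.indicator (fun _ => (1:ℝ≥0∞)) (T (x, v))
            = s.indicator (fun _ => (1:ℝ≥0∞)) (fun j => v j * x j)
              * Φ (fun j => (v j * x j) / v j)
          rw [e1, ← e2]
          exact mul_comm _ _
        rw [lintegral_congr h2, my_lintegral_comp_scale v hv hH]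
      · have hf0 : fE v = 0 := by rw [hfE_def]; simp [hf_supp v hv]
        rw [hf0]
        simp
    rw [lintegral_congr hstep3]
    have hstep4 : ∀ v, fE v * (K v * ∫⁻ u, s.indicator (fun _ => (1:ℝ≥0∞)) u * Ψ u v)
        = ∫⁻ u, s.indicator (fun _ => (1:ℝ≥0∞)) u * (Ψ u v * (K v * fE v)) := by
      intro v
      have h1 : fE v * (K v * ∫⁻ u, s.indicator (fun _ => (1:ℝ≥0∞)) u * Ψ u v)
          = (K v * fE v) * ∫⁻ u, s.indicator (fun _ => (1:ℝ≥0∞)) u * Ψ u v := by ring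
      rw [h1, ← lintegral_const_mul' _ _ (hKfE_ne_top v)]
      exact lintegral_congr fun u => by ring
    rw [lintegral_congr hstep4]
    have hm2 : Measurable (Function.uncurry fun v u =>
        s.indicator (fun _ => (1:ℝ≥0∞)) u * (Ψ u v * (K v * fE v))) := by
      apply ((measurable_const.indicator hs).comp measurable_snd).mul
      exact (hΨ_pair.comp measurable_swap).mul
        (((hK_meas.comp measurable_fst)).mul (hfE_meas.comp measurable_fst))
    rw [lintegral_lintegral_swap hm2.aemeasurable]
    have hstep6 : ∀ u, ∫⁻ v, s.indicator (fun _ => (1:ℝ≥0∞)) u * (Ψ u v * (K v * fE v))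
        = s.indicator gE u := by
      intro u
      have hne : s.indicator (fun _ => (1:ℝ≥0∞)) u ≠ ∞ := by
        by_cases h : u ∈ s
        · rw [Set.indicator_of_mem h]; exact ENNReal.one_ne_top
        · rw [Set.indicator_of_notMem h]; exact ENNReal.zero_ne_top
      rw [lintegral_const_mul' _ _ hne]
      by_cases h : u ∈ s
      · rw [Set.indicator_of_mem h, Set.indicator_of_mem h, one_mul, hgE_def]
      · rw [Set.indicator_of_notMem h, Set.indicator_of_notMem h, zero_mul]
    rw [lintegral_congr hstep6, lintegral_indicator hs]
  rw [key]
  set P : Set (Fin k → ℝ) := {u : Fin k → ℝ | ∀ j, 0 < u j} with hP_def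
  have htot : ∫⁻ u, gE u ≠ ⊤ := by
    have h1 : (volume.withDensity gE) Set.univ
        = (Measure.map T ((volume.withDensity Φ).prod (volume.withDensity fE)))
            Set.univ := by rw [key]
    rw [Measure.map_apply hT_meas MeasurableSet.univ, Set.preimage_univ,
      ← Set.univ_prod_univ, Measure.prod_prod,
      withDensity_apply _ MeasurableSet.univ, Measure.restrict_univ,
      withDensity_apply _ MeasurableSet.univ, Measure.restrict_univ,
      withDensity_apply _ MeasurableSet.univ, Measure.restrict_univ] at h1
    rw [h1]
    exact ENNReal.mul_ne_top hμ_fin.ne (by rw [hf_int]; exact ENNReal.one_ne_top)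
  have h_fin : ∀ᵐ u : Fin k → ℝ, gE u < ⊤ := ae_lt_top hgE_meas htot
  refine withDensity_congr_ae (h_fin.mono fun u hu => ?_)
  by_cases hup : ∀ j, 0 < u j
  · -- u in the positive orthant
    have hmemP : u ∈ P := hup
    set Tu : Set (Fin k → ℝ) := {v : Fin k → ℝ | ∀ j, A j * u j < v j} with hTu_def
    have hTu_meas : MeasurableSet Tu := by
      have : Tu = ⋂ j, ((fun v : Fin k → ℝ => v j) ⁻¹' (Set.Ioi (A j * u j))) := by
        ext v; simp [hTu_def, Set.mem_iInter]
      rw [this]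
      exact MeasurableSet.iInter fun j => measurable_pi_apply j measurableSet_Ioi
    set F : (Fin k → ℝ) → ℝ :=
      fun v => (∏ j, v j ^ (-ζ j - E j - 1) * (v j - A j * u j) ^ E j) * f v with hF_def
    set h₀ : (Fin k → ℝ) → ℝ := Tu.indicator F with hh_def
    have hCr_pos : 0 < ∏ j, c j * u j ^ ζ j :=
      Finset.prod_pos fun j _ => mul_pos (hc j) (Real.rpow_pos_of_pos (hup j) _)
    have hpoint : ∀ v, Ψ u v * (K v * fE v)
        = ENNReal.ofReal (∏ j, c j * u j ^ ζ j) * ENNReal.ofReal (h₀ v) := by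
      intro v
      by_cases hv : ∀ j, 0 < v j
      · by_cases hvu : ∀ j, A j * u j < v j
        · have hmemS : (fun j => u j / v j) ∈ S := by
            intro j
            refine ⟨div_pos (hup j) (hv j), ?_⟩
            rw [div_lt_div_iff₀ (hv j) (hA j), one_mul, mul_comm]
            exact hvu j
          have hmemTu : v ∈ Tu := hvu
          have hprodv : (0:ℝ) < ∏ j, v j := Finset.prod_pos fun j _ => hv j
          have hφr_nonneg : (0:ℝ)
              ≤ ∏ j, c j * ((u j / v j) ^ ζ j * (1 - A j * (u j / v j)) ^ E j) := by
            apply Finset.prod_nonneg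
            intro j _
            have h1 : A j * (u j / v j) ≤ 1 := by
              rw [← mul_div_assoc, div_le_one (hv j)]
              exact (hvu j).le
            exact mul_nonneg (hc j).le (mul_nonneg
              (Real.rpow_nonneg (div_pos (hup j) (hv j)).le _)
              (Real.rpow_nonneg (by linarith) _))
          rw [hΨ_def, hΦ_def, hφr_def, hK_def, hfE_def, hh_def, hF_def]
          simp only
          rw [Set.indicator_of_mem hmemS, Set.indicator_of_mem hmemTu]
          rw [← ENNReal.ofReal_prod_of_nonneg (fun j _ => (hv j).le),
            ← ENNReal.ofReal_inv_of_pos hprodv,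
            ← ENNReal.ofReal_mul (inv_nonneg.mpr hprodv.le),
            ← ENNReal.ofReal_mul hφr_nonneg,
            ← ENNReal.ofReal_mul hCr_pos.le]
          congr 1
          have hper : ∀ j : Fin k,
              c j * ((u j / v j) ^ ζ j * (1 - A j * (u j / v j)) ^ E j) * (v j)⁻¹
              = (c j * u j ^ ζ j)
                * (v j ^ (-ζ j - E j - 1) * (v j - A j * u j) ^ E j) :=
            fun j => my_coord_eq (hup j) (hv j) (hvu j)
          have hmerge : (∏ j, c j * ((u j / v j) ^ ζ j * (1 - A j * (u j / v j)) ^ E j))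
                * (∏ j, v j)⁻¹
              = (∏ j, c j * u j ^ ζ j)
                * (∏ j, v j ^ (-ζ j - E j - 1) * (v j - A j * u j) ^ E j) := by
            rw [← Finset.prod_inv_distrib, ← Finset.prod_mul_distrib,
              ← Finset.prod_mul_distrib]
            exact Finset.prod_congr rfl fun j _ => hper j
          calc (∏ j, c j * ((u j / v j) ^ ζ j * (1 - A j * (u j / v j)) ^ E j))
                * ((∏ j, v j)⁻¹ * f v)
              = ((∏ j, c j * ((u j / v j) ^ ζ j * (1 - A j * (u j / v j)) ^ E j))
                  * (∏ j, v j)⁻¹) * f v := by ring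
            _ = ((∏ j, c j * u j ^ ζ j)
                  * (∏ j, v j ^ (-ζ j - E j - 1) * (v j - A j * u j) ^ E j)) * f v := by
                rw [hmerge]
            _ = (∏ j, c j * u j ^ ζ j)
                  * ((∏ j, v j ^ (-ζ j - E j - 1) * (v j - A j * u j) ^ E j) * f v) := by
                ring
        · obtain ⟨j0, hj0⟩ := not_forall.mp hvu
          have hj0' : v j0 ≤ A j0 * u j0 := not_lt.mp hj0
          have hnotS : (fun j => u j / v j) ∉ S := by
            intro hmem
            have h2 := (hmem j0).2
            rw [div_lt_div_iff₀ (hv j0) (hA j0), one_mul, mul_comm] at h2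
            linarith
          have hnotTu : v ∉ Tu := fun hmem => absurd (hmem j0) hj0
          rw [hΨ_def, hΦ_def, hh_def]
          simp only
          rw [Set.indicator_of_notMem hnotS, Set.indicator_of_notMem hnotTu]
          simp
      · have hf0 : f v = 0 := hf_supp v hv
        have hnotTu : v ∉ Tu := by
          intro hmem
          exact hv fun j => lt_trans (mul_pos (hA j) (hup j)) (hmem j)
        rw [hfE_def, hh_def]
        simp only
        rw [hf0, Set.indicator_of_notMem hnotTu]
        simp
    have hgEu : gE u
        = ENNReal.ofReal (∏ j, c j * u j ^ ζ j) * ∫⁻ v, ENNReal.ofReal (h₀ v) := by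
      rw [hgE_def]
      simp only
      rw [lintegral_congr hpoint]
      exact lintegral_const_mul' _ _ ENNReal.ofReal_ne_top
    have hF_meas : Measurable F := by
      rw [hF_def]
      apply Measurable.mul _ hf_meas
      apply Finset.measurable_prod
      intro j _
      exact ((my_measurable_rpow_const _).comp (measurable_pi_apply j)).mul
        ((my_measurable_rpow_const _).comp ((measurable_pi_apply j).sub measurable_const))
    have hh_meas : Measurable h₀ := by
      rw [hh_def]; exact hF_meas.indicator hTu_meas
    have hh_nonneg : ∀ v, 0 ≤ h₀ v := by
      intro v
      rw [hh_def]
      apply Set.indicator_nonneg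
      intro v' hv'
      apply mul_nonneg _ (hf_nonneg v')
      apply Finset.prod_nonneg
      intro j _
      have hvj : (0:ℝ) < v' j := lt_trans (mul_pos (hA j) (hup j)) (hv' j)
      have hvj2 : (0:ℝ) ≤ v' j - A j * u j := by
        have := hv' j; linarith
      exact mul_nonneg (Real.rpow_nonneg hvj.le _) (Real.rpow_nonneg hvj2 _)
    have hlint_ne : ∫⁻ v, ENNReal.ofReal (h₀ v) ≠ ⊤ := by
      intro hcontra
      have hgtop : gE u = ⊤ := by
        rw [hgEu, hcontra, ENNReal.mul_top (ENNReal.ofReal_pos.mpr hCr_pos).ne']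
      rw [hgtop] at hu
      exact absurd hu (lt_irrefl ⊤)
    have hInt : Integrable h₀ := by
      refine ⟨hh_meas.aestronglyMeasurable, ?_⟩
      rw [hasFiniteIntegral_iff_ofReal (Filter.Eventually.of_forall hh_nonneg)]
      exact lt_top_iff_ne_top.mpr hlint_ne
    have hBochner : ∫⁻ v, ENNReal.ofReal (h₀ v) = ENNReal.ofReal (∫ v, h₀ v) :=
      (ofReal_integral_eq_lintegral_ofReal hInt (Filter.Eventually.of_forall hh_nonneg)).symm
    have hSetInt : ∫ v, h₀ v = ∫ v in Tu, F v := by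
      rw [hh_def]; exact integral_indicator hTu_meas
    rw [hgEu, hBochner, hSetInt, ← ENNReal.ofReal_mul hCr_pos.le]
    congr 1
    rw [Set.indicator_of_mem hmemP]
  · -- u outside the positive orthant
    have hzero : ∀ v, Ψ u v * (K v * fE v) = 0 := by
      intro v
      by_cases hv : ∀ j, 0 < v j
      · obtain ⟨j0, hj0⟩ := not_forall.mp hup
        have hnotS : (fun j => u j / v j) ∉ S := by
          intro hmem
          apply hj0
          have h := (hmem j0).1
          have h2 := mul_pos h (hv j0)
          rwa [div_mul_cancel₀ _ (hv j0).ne'] at h2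
        rw [hΨ_def, hΦ_def]
        simp only
        rw [Set.indicator_of_notMem hnotS]
        simp
      · rw [hfE_def]
        simp [hf_supp v hv]
    have hgE0 : gE u = 0 := by
      rw [hgE_def]
      simp only
      rw [lintegral_congr hzero]
      simp
    rw [hgE0]
    simp only [Set.indicator_of_notMem (show u ∉ P from hup), ENNReal.ofReal_zero]

/-- Normalizing constant of the pathway density with parameters `a, q, η, ζ`:
`c = [a(1−q)]^{ζ+1} Γ(ζ + η/(1−q) + 2)/(Γ(ζ+1) Γ(η/(1−q) + 1))`. -/
noncomputable def pathwayC (a q η ζ : ℝ) : ℝ :=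
  (a * (1 - q)) ^ (ζ + 1) * Real.Gamma (ζ + η / (1 - q) + 2) /
    (Real.Gamma (ζ + 1) * Real.Gamma (η / (1 - q) + 1))

/-- Theorem 1.4: if `x_1,…,x_k` are independent pathway distributed variables with
parameters `a_j, q_j, η_j, ζ_j`, and `(v_1,…,v_k)` has an arbitrary joint density `f`
on the positive orthant, independent of the `x_j`, then the joint density of
`u_j = x_j v_j` is given by (1.15), i.e. the pathway-extended multivariable Kober
representation of the second kind. -/
theorem pathway_kober2_density {k : ℕ} (hk : 1 ≤ k) (a q η ζ : Fin k → ℝ)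
    (ha : ∀ j, 0 < a j) (hq : ∀ j, q j < 1) (hη : ∀ j, 0 < η j) (hζ : ∀ j, -1 < ζ j)
    (f : (Fin k → ℝ) → ℝ) (hf_meas : Measurable f) (hf_nonneg : ∀ x, 0 ≤ f x)
    (hf_supp : ∀ x, ¬ (∀ j, 0 < x j) → f x = 0)
    (hf_int : ∫⁻ x, ENNReal.ofReal (f x) = 1) :
    Measure.map (fun p : (Fin k → ℝ) × (Fin k → ℝ) => fun j => p.1 j * p.2 j)
      ((volume.withDensity (fun x => ENNReal.ofReal
          (Set.indicator
            {x : Fin k → ℝ | ∀ j, 0 < x j ∧ x j < 1 / (a j * (1 - q j))}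
            (fun x => ∏ j, pathwayC (a j) (q j) (η j) (ζ j) *
              (x j ^ ζ j *
                (1 - a j * (1 - q j) * x j) ^ (η j / (1 - q j)))) x))).prod
        (volume.withDensity fun v => ENNReal.ofReal (f v)))
    = volume.withDensity fun u => ENNReal.ofReal
        (Set.indicator {u : Fin k → ℝ | ∀ j, 0 < u j}
          (fun u => (∏ j, pathwayC (a j) (q j) (η j) (ζ j) * u j ^ ζ j) *
            ∫ v in {v : Fin k → ℝ | ∀ j, a j * (1 - q j) * u j < v j},
              (∏ j, v j ^ (-ζ j - η j / (1 - q j) - 1) *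
                (v j - a j * (1 - q j) * u j) ^ (η j / (1 - q j))) * f v) u) := by
  have hc : ∀ j, 0 < pathwayC (a j) (q j) (η j) (ζ j) := by
    intro j
    have h1q : (0:ℝ) < 1 - q j := by linarith [hq j]
    have hEj : (0:ℝ) < η j / (1 - q j) := div_pos (hη j) h1q
    unfold pathwayC
    apply div_pos
    · exact mul_pos (Real.rpow_pos_of_pos (mul_pos (ha j) h1q) _)
        (Real.Gamma_pos_of_pos (by linarith [hζ j]))
    · exact mul_pos (Real.Gamma_pos_of_pos (by linarith [hζ j]))
        (Real.Gamma_pos_of_pos (by linarith))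
  exact my_main_aux (fun j => a j * (1 - q j)) (fun j => η j / (1 - q j))
    (fun j => pathwayC (a j) (q j) (η j) (ζ j)) ζ
    (fun j => mul_pos (ha j) (by linarith [hq j]))
    (fun j => div_pos (hη j) (by linarith [hq j]))
    hc hζ f hf_meas hf_nonneg hf_supp hf_int
end

section
/- Let k ≥ 1 and let ζ_j > 0, α_j > 0 be real numbers for j = 1,…,k. Let φ be the product of independent type-1 beta densities with parameters (ζ_j, α_j), i.e. φ(x) = ∏_{j=1}^k [Γ(ζ_j+α_j)/(Γ(ζ_j)Γ(α_j))] x_j^{ζ_j−1}(1−x_j)^{α_j−1} for x ∈ (0,1)^k and 0 otherwise, and let f : ℝ^k → [0,∞) be a measurable probability density vanishing outside (0,∞)^k. Then the pushforward of (volume.withDensity φ) ⊗ (volume.withDensity f) on ℝ^k × ℝ^k under the map (x, v) ↦ (v_1/x_1, …, v_k/x_k) equals volume.withDensity g, where g satisfies ∏_{j=1}^k [Γ(ζ_j)/Γ(ζ_j+α_j)] · g(u) = (I^{(ζ,α)} f)(u) for almost every u ∈ (0,∞)^k, with I^{(ζ,α)} the multivariable Kober fractional integral operator of the first kind. -/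
open MeasureTheory Real Set
open scoped ENNReal

/-- The multivariable Kober fractional integral operator of the first kind with
parameters `(ζ j, α j)`, `j = 1,…,k`. -/
noncomputable def kober1 {k : ℕ} (ζ α : Fin k → ℝ) (f : (Fin k → ℝ) → ℝ)
    (u : Fin k → ℝ) : ℝ :=
  (∏ j, u j ^ (-ζ j - α j) / Real.Gamma (α j)) *
    ∫ v in {v : Fin k → ℝ | ∀ j, 0 < v j ∧ v j < u j},
      (∏ j, (u j - v j) ^ (α j - 1) * v j ^ ζ j) * f v

section aux

variable {k : ℕ}

/-- Change of variables under coordinatewise scaling, first form. -/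
private lemma lintegral_comp_mul_pi (c : Fin k → ℝ) (hc : ∀ j, c j ≠ 0)
    (h : (Fin k → ℝ) → ℝ≥0∞) (hh : Measurable h) :
    ∫⁻ v : Fin k → ℝ, h (fun j => c j * v j)
      = ENNReal.ofReal |∏ j, c j|⁻¹ * ∫⁻ v, h v := by
  have hdet : LinearMap.det (Matrix.toLin' (Matrix.diagonal c)) = ∏ j, c j := by
    rw [LinearMap.det_toLin', Matrix.det_diagonal]
  have hne : LinearMap.det (Matrix.toLin' (Matrix.diagonal c)) ≠ 0 := by
    rw [hdet]; exact Finset.prod_ne_zero_iff.2 fun j _ => hc j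
  have hmap := Real.map_linearMap_volume_pi_eq_smul_volume_pi hne
  have happ : ∀ v : Fin k → ℝ,
      (Matrix.toLin' (Matrix.diagonal c)) v = fun j => c j * v j := by
    intro v; funext j
    simp [Matrix.toLin'_apply, Matrix.mulVec_diagonal]
  calc ∫⁻ v : Fin k → ℝ, h (fun j => c j * v j)
      = ∫⁻ v : Fin k → ℝ, h ((Matrix.toLin' (Matrix.diagonal c)) v) := by simp_rw [happ]
    _ = ∫⁻ v, h v ∂(Measure.map (Matrix.toLin' (Matrix.diagonal c)) volume) := by
        rw [lintegral_map hh]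
        exact (Matrix.toLin' (Matrix.diagonal c)).continuous_of_finiteDimensional.measurable
    _ = ENNReal.ofReal |∏ j, c j|⁻¹ * ∫⁻ v, h v := by
        rw [hmap, hdet, lintegral_smul_measure, abs_inv, smul_eq_mul]

/-- Change of variables under coordinatewise scaling, second form. -/
private lemma lintegral_eq_mul_comp_pi (c : Fin k → ℝ) (hc : ∀ j, c j ≠ 0)
    (h : (Fin k → ℝ) → ℝ≥0∞) (hh : Measurable h) :
    ∫⁻ v, h v
      = ENNReal.ofReal |∏ j, c j| * ∫⁻ v : Fin k → ℝ, h (fun j => c j * v j) := by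
  have h2 : Measurable fun w : Fin k → ℝ => h (fun j => c j * w j) := by
    exact hh.comp (by fun_prop)
  have key := lintegral_comp_mul_pi (fun j => (c j)⁻¹) (fun j => inv_ne_zero (hc j))
    (fun w => h (fun j => c j * w j)) h2
  have e1 : ∀ v : Fin k → ℝ, (fun j => c j * ((c j)⁻¹ * v j)) = v := by
    intro v; funext j; exact mul_inv_cancel_left₀ (hc j) _
  simp only [] at key
  rw [lintegral_congr (fun v => by rw [e1 v])] at key
  rw [key, Finset.prod_inv_distrib, abs_inv, inv_inv]

/-- Per-coordinate algebraic identity used in the change of variables. -/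
private lemma coord_id (ζ α u v C : ℝ) (hu : 0 < u) (hv : 0 < v) (hvu : v < u) :
    C * ((u⁻¹ * v) ^ (ζ - 1) * (1 - u⁻¹ * v) ^ (α - 1)) * (u⁻¹ * v)
      = C * u ^ (1 - ζ - α) * ((u - v) ^ (α - 1) * v ^ ζ) := by
  have hui : (0:ℝ) < u⁻¹ := inv_pos.2 hu
  have huv : (0:ℝ) < u - v := sub_pos.2 hvu
  have h2 : ∀ s : ℝ, (u⁻¹) ^ s = u ^ (-s) := fun s => by
    rw [← Real.rpow_neg_one, ← Real.rpow_mul hu.le, neg_one_mul]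
  have h1 : (1 : ℝ) - u⁻¹ * v = u⁻¹ * (u - v) := by field_simp
  rw [h1, Real.mul_rpow hui.le hv.le, Real.mul_rpow hui.le huv.le, h2, h2]
  have h3 : u⁻¹ = u ^ (-1 : ℝ) := by rw [Real.rpow_neg_one]
  rw [h3]
  have h4 : v ^ (ζ - 1) * v = v ^ ζ := by
    rw [← Real.rpow_add_one hv.ne']; norm_num
  have h5 : u ^ (-(ζ - 1)) * u ^ (-(α - 1)) * u ^ (-1 : ℝ) = u ^ (1 - ζ - α) := by
    rw [← Real.rpow_add hu, ← Real.rpow_add hu]; congr 1; ring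
  calc C * (u ^ (-(ζ - 1)) * v ^ (ζ - 1) * (u ^ (-(α - 1)) * (u - v) ^ (α - 1)))
        * (u ^ (-1:ℝ) * v)
      = C * (u ^ (-(ζ - 1)) * u ^ (-(α - 1)) * u ^ (-1:ℝ))
        * ((u - v) ^ (α - 1) * (v ^ (ζ - 1) * v)) := by ring
    _ = C * u ^ (1 - ζ - α) * ((u - v) ^ (α - 1) * v ^ ζ) := by rw [h4, h5]

/-- Integrability of the type-1 beta kernel on `(0,1)`. -/
private lemma beta_integrableOn {a b : ℝ} (ha : 0 < a) (hb : 0 < b) :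
    IntegrableOn (fun t : ℝ => t ^ (a - 1) * (1 - t) ^ (b - 1)) (Ioo 0 1) := by
  have hC : IntervalIntegrable (fun x : ℝ =>
      (x : ℂ) ^ ((a : ℂ) - 1) * (1 - (x : ℂ)) ^ ((b : ℂ) - 1)) volume 0 1 :=
    Complex.betaIntegral_convergent (by simpa using ha) (by simpa using hb)
  have h1 : IntegrableOn (fun x : ℝ =>
      (x : ℂ) ^ ((a : ℂ) - 1) * (1 - (x : ℂ)) ^ ((b : ℂ) - 1)) (Ioo 0 1) := by
    rw [intervalIntegrable_iff_integrableOn_Ioo_of_le (by norm_num)] at hC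
    exact hC
  have h2 := h1.norm
  refine IntegrableOn.congr_fun h2 ?_ measurableSet_Ioo
  intro x hx
  simp only []
  rw [norm_mul]
  rw [Complex.norm_cpow_eq_rpow_re_of_pos hx.1]
  have h1x : (0:ℝ) < 1 - x := by linarith [hx.2]
  rw [show (1 : ℂ) - (x:ℝ) = ((1 - x : ℝ) : ℂ) by push_cast; ring]
  rw [Complex.norm_cpow_eq_rpow_re_of_pos h1x]
  norm_num

end aux

/-- Theorem 2.1: if `x_1,…,x_k` are independent type-1 beta variables with parameters
`(ζ_j, α_j)` and `(v_1,…,v_k)` has an arbitrary joint density `f` on the positive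
orthant, independent of the `x_j`, then the joint density `g` of `u_j = v_j/x_j`
satisfies `(∏ Γ(ζ_j)/Γ(ζ_j+α_j)) g(u) = (I^{(ζ,α)} f)(u)` a.e. on the positive
orthant. -/
theorem kober1_as_density_beta {k : ℕ} (hk : 1 ≤ k) (ζ α : Fin k → ℝ)
    (hζ : ∀ j, 0 < ζ j) (hα : ∀ j, 0 < α j)
    (f : (Fin k → ℝ) → ℝ) (hf_meas : Measurable f) (hf_nonneg : ∀ x, 0 ≤ f x)
    (hf_supp : ∀ x, ¬ (∀ j, 0 < x j) → f x = 0)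
    (hf_int : ∫⁻ x, ENNReal.ofReal (f x) = 1) :
    ∃ g : (Fin k → ℝ) → ℝ, Measurable g ∧
      Measure.map (fun p : (Fin k → ℝ) × (Fin k → ℝ) => fun j => p.2 j / p.1 j)
          ((volume.withDensity (fun x => ENNReal.ofReal
              (Set.indicator {x : Fin k → ℝ | ∀ j, 0 < x j ∧ x j < 1}
                (fun x => ∏ j, Real.Gamma (ζ j + α j) /
                  (Real.Gamma (ζ j) * Real.Gamma (α j)) *
                    (x j ^ (ζ j - 1) * (1 - x j) ^ (α j - 1))) x))).prod
            (volume.withDensity fun v => ENNReal.ofReal (f v)))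
        = volume.withDensity (fun u => ENNReal.ofReal (g u)) ∧
      ∀ᵐ u : Fin k → ℝ, (∀ j, 0 < u j) →
        (∏ j, Real.Gamma (ζ j) / Real.Gamma (ζ j + α j)) * g u
          = kober1 ζ α f u := by
  classical
  set S1 : Set (Fin k → ℝ) := {x : Fin k → ℝ | ∀ j, 0 < x j ∧ x j < 1} with hS1def
  set φr : (Fin k → ℝ) → ℝ := Set.indicator S1
      (fun x => ∏ j, Real.Gamma (ζ j + α j) /
        (Real.Gamma (ζ j) * Real.Gamma (α j)) *
          (x j ^ (ζ j - 1) * (1 - x j) ^ (α j - 1))) with hφrdef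
  set φ' : (Fin k → ℝ) → ℝ≥0∞ := fun x => ENNReal.ofReal (φr x) with hφ'def
  set f' : (Fin k → ℝ) → ℝ≥0∞ := fun v => ENNReal.ofReal (f v) with hf'def
  set T : (Fin k → ℝ) × (Fin k → ℝ) → (Fin k → ℝ) :=
    fun p => fun j => p.2 j / p.1 j with hTdef
  have hGamma_pos : ∀ j, 0 < Real.Gamma (ζ j) ∧ 0 < Real.Gamma (α j) ∧
      0 < Real.Gamma (ζ j + α j) := fun j =>
    ⟨Real.Gamma_pos_of_pos (hζ j), Real.Gamma_pos_of_pos (hα j),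
      Real.Gamma_pos_of_pos (by linarith [hζ j, hα j])⟩
  have hC_nonneg : ∀ j, 0 ≤ Real.Gamma (ζ j + α j) /
      (Real.Gamma (ζ j) * Real.Gamma (α j)) := fun j =>
    div_nonneg (hGamma_pos j).2.2.le
      (mul_nonneg (hGamma_pos j).1.le (hGamma_pos j).2.1.le)
  have hS1m : MeasurableSet S1 := by
    have h : S1 = ⋂ j, (fun x : Fin k → ℝ => x j) ⁻¹' Ioo 0 1 := by
      ext x; simp [hS1def, mem_iInter, mem_Ioo]
    rw [h]
    exact MeasurableSet.iInter fun j => (measurable_pi_apply j) measurableSet_Ioo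
  have hφrm : Measurable φr := by
    apply Measurable.indicator _ hS1m
    fun_prop
  have hφ'm : Measurable φ' := hφrm.ennreal_ofReal
  have hf'm : Measurable f' := hf_meas.ennreal_ofReal
  have hTm : Measurable T := by
    apply measurable_pi_lambda
    intro j
    exact ((measurable_pi_apply j).comp measurable_snd).div
      ((measurable_pi_apply j).comp measurable_fst)
  set G : (Fin k → ℝ) → ℝ≥0∞ := fun u => ∫⁻ x, φ' x *
      f' (fun j => x j * u j) * ENNReal.ofReal (∏ j, x j) with hGdef
  have hFm : Measurable (Function.uncurry fun (u x : Fin k → ℝ) =>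
      φ' x * f' (fun j => x j * u j) * ENNReal.ofReal (∏ j, x j)) := by
    apply Measurable.fun_mul
    · apply Measurable.fun_mul
      · exact hφ'm.comp measurable_snd
      · exact hf'm.comp (by fun_prop)
    · fun_prop
  have hGm : Measurable G := hFm.lintegral_prod_right
  have hφr_zero : ∀ x, x ∉ S1 → φr x = 0 := fun x hx => indicator_of_notMem hx _
  have hfin2 : IsFiniteMeasure (volume.withDensity f') := by
    constructor
    rw [withDensity_apply _ MeasurableSet.univ, Measure.restrict_univ, hf_int]
    exact ENNReal.one_lt_top
  -- the pushforward identity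
  have hmap : Measure.map T ((volume.withDensity φ').prod (volume.withDensity f'))
      = volume.withDensity G := by
    ext s hs
    rw [Measure.map_apply hTm hs, withDensity_apply _ hs,
      Measure.prod_apply (hTm hs),
      lintegral_withDensity_eq_lintegral_mul _ hφ'm
        (measurable_measure_prodMk_left (hTm hs))]
    have key : ∀ x : Fin k → ℝ, (φ' * fun x => (volume.withDensity f')
          (Prod.mk x ⁻¹' (T ⁻¹' s))) x
        = ∫⁻ u, φ' x * ENNReal.ofReal (∏ j, x j) *
            (s.indicator (fun _ => (1:ℝ≥0∞)) u * f' (fun j => x j * u j)) := by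
      intro x
      by_cases hx : x ∈ S1
      · have hxpos : ∀ j, 0 < x j := fun j => (hx j).1
        have hBm : MeasurableSet (Prod.mk x ⁻¹' (T ⁻¹' s)) := by
          have h : Prod.mk x ⁻¹' (T ⁻¹' s)
              = (fun v : Fin k → ℝ => fun j => v j / x j) ⁻¹' s := by
            ext v; simp [hTdef]
          rw [h]
          exact (measurable_pi_lambda _ fun j => (measurable_pi_apply j).div_const _) hs
        have h1 : (volume.withDensity f') (Prod.mk x ⁻¹' (T ⁻¹' s))
            = ∫⁻ v, (s.indicator (fun _ => (1:ℝ≥0∞)) (fun j => v j / x j)) * f' v := by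
          rw [withDensity_apply _ hBm, ← lintegral_indicator hBm]
          refine lintegral_congr fun v => ?_
          by_cases hv : (fun j => v j / x j) ∈ s
          · rw [indicator_of_mem (show v ∈ Prod.mk x ⁻¹' (T ⁻¹' s) from hv),
              indicator_of_mem hv, one_mul]
          · rw [indicator_of_notMem (show v ∉ Prod.mk x ⁻¹' (T ⁻¹' s) from hv),
              indicator_of_notMem hv, zero_mul]
        have hhm : Measurable fun v : Fin k → ℝ =>
            (s.indicator (fun _ => (1:ℝ≥0∞)) (fun j => v j / x j)) * f' v := by
          apply Measurable.fun_mul _ hf'm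
          exact ((measurable_const.indicator hs).comp
            (measurable_pi_lambda _ fun j => (measurable_pi_apply j).div_const _))
        have h2 := lintegral_eq_mul_comp_pi x (fun j => (hxpos j).ne') _ hhm
        have h3 : ∀ u : Fin k → ℝ,
            (s.indicator (fun _ => (1:ℝ≥0∞)) (fun j => (x j * u j) / x j)) *
              f' (fun j => x j * u j)
            = s.indicator (fun _ => (1:ℝ≥0∞)) u * f' (fun j => x j * u j) := by
          intro u
          congr 2
          funext j
          exact mul_div_cancel_left₀ _ (hxpos j).ne'
        have hmeas' : Measurable fun u : Fin k → ℝ =>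
            s.indicator (fun _ => (1:ℝ≥0∞)) u * f' (fun j => x j * u j) := by
          apply Measurable.fun_mul _ (hf'm.comp (by fun_prop))
          exact measurable_const.indicator hs
        rw [Pi.mul_apply, h1, h2]
        simp only []
        rw [lintegral_congr fun u => h3 u]
        rw [show |∏ j, x j| = ∏ j, x j from
          abs_of_pos (Finset.prod_pos fun j _ => hxpos j)]
        rw [lintegral_const_mul (φ' x * ENNReal.ofReal (∏ j, x j)) hmeas']
        ring
      · have hz : φ' x = 0 := by rw [hφ'def]; simp only []; rw [hφr_zero x hx]; simp
        rw [Pi.mul_apply, hz, zero_mul]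
        symm
        simp only [hz, zero_mul, lintegral_zero]
    rw [lintegral_congr key]
    have hswapm : Measurable (Function.uncurry fun (x u : Fin k → ℝ) =>
        φ' x * ENNReal.ofReal (∏ j, x j) *
          (s.indicator (fun _ => (1:ℝ≥0∞)) u * f' (fun j => x j * u j))) := by
      apply Measurable.fun_mul
      · exact ((hφ'm.comp measurable_fst).fun_mul (by fun_prop))
      · apply Measurable.fun_mul
        · exact (measurable_const.indicator hs).comp measurable_snd
        · exact hf'm.comp (by fun_prop)
    rw [lintegral_lintegral_swap hswapm.aemeasurable]
    rw [← lintegral_indicator hs]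
    refine lintegral_congr fun u => ?_
    by_cases hu : u ∈ s
    · rw [indicator_of_mem hu, indicator_of_mem hu, hGdef]
      have hbeta : ∫⁻ x : Fin k → ℝ, φ' x * ENNReal.ofReal (∏ j, x j) *
            (1 * f' fun j => x j * u j)
          = ∫⁻ x : Fin k → ℝ, (φ' x * f' fun j => x j * u j) *
            ENNReal.ofReal (∏ j, x j) :=
        lintegral_congr fun x => by ring
      exact hbeta
    · rw [indicator_of_notMem hu]
      simp only [indicator_of_notMem hu, zero_mul, mul_zero, lintegral_zero]
  -- finiteness of the total mass of φ'
  have hβint : ∀ j, Integrable ((Ioo (0:ℝ) 1).indicator (fun t =>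
      Real.Gamma (ζ j + α j) / (Real.Gamma (ζ j) * Real.Gamma (α j)) *
        (t ^ (ζ j - 1) * (1 - t) ^ (α j - 1)))) := by
    intro j
    rw [integrable_indicator_iff measurableSet_Ioo]
    exact (beta_integrableOn (hζ j) (hα j)).const_mul _
  have hφprod : Integrable (fun x : Fin k → ℝ =>
      ∏ j, ((Ioo (0:ℝ) 1).indicator (fun t =>
        Real.Gamma (ζ j + α j) / (Real.Gamma (ζ j) * Real.Gamma (α j)) *
          (t ^ (ζ j - 1) * (1 - t) ^ (α j - 1)))) (x j)) :=
    Integrable.fintype_prod hβint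
  have hind_nonneg : ∀ j (t : ℝ), 0 ≤ ((Ioo (0:ℝ) 1).indicator (fun t =>
      Real.Gamma (ζ j + α j) / (Real.Gamma (ζ j) * Real.Gamma (α j)) *
        (t ^ (ζ j - 1) * (1 - t) ^ (α j - 1)))) t := by
    intro j t
    apply indicator_nonneg
    intro t ht
    exact mul_nonneg (hC_nonneg j) (mul_nonneg (Real.rpow_nonneg ht.1.le _)
      (Real.rpow_nonneg (by linarith [ht.2]) _))
  have hφr_eq : ∀ x : Fin k → ℝ, φr x = ∏ j, ((Ioo (0:ℝ) 1).indicator (fun t =>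
      Real.Gamma (ζ j + α j) / (Real.Gamma (ζ j) * Real.Gamma (α j)) *
        (t ^ (ζ j - 1) * (1 - t) ^ (α j - 1)))) (x j) := by
    intro x
    by_cases hx : x ∈ S1
    · rw [hφrdef, indicator_of_mem hx]
      exact Finset.prod_congr rfl fun j _ => by
        rw [indicator_of_mem (show x j ∈ Ioo (0:ℝ) 1 from ⟨(hx j).1, (hx j).2⟩)]
    · rw [hφr_zero x hx]
      obtain ⟨j0, hj0⟩ : ∃ j, ¬(0 < x j ∧ x j < 1) := by
        by_contra h; push_neg at h
        exact hx fun j => h j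
      symm
      apply Finset.prod_eq_zero (Finset.mem_univ j0)
      rw [indicator_of_notMem (by simpa [mem_Ioo] using hj0)]
  have hφlint : ∫⁻ x, φ' x ≠ ∞ := by
    have h1 : ∫⁻ x, φ' x = ∫⁻ x : Fin k → ℝ,
        (‖∏ j, ((Ioo (0:ℝ) 1).indicator (fun t =>
          Real.Gamma (ζ j + α j) / (Real.Gamma (ζ j) * Real.Gamma (α j)) *
            (t ^ (ζ j - 1) * (1 - t) ^ (α j - 1)))) (x j)‖₊ : ℝ≥0∞) := by
      refine lintegral_congr fun x => ?_
      rw [hφ'def]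
      simp only []
      rw [hφr_eq x, ← Real.enorm_eq_ofReal
        (Finset.prod_nonneg fun j _ => hind_nonneg j (x j)), enorm_eq_nnnorm]
    rw [h1]
    exact hφprod.2.ne
  have hGlint : ∫⁻ u, G u ≠ ∞ := by
    have h0 : volume.withDensity G Set.univ ≠ ∞ := by
      rw [← hmap, Measure.map_apply hTm MeasurableSet.univ, Set.preimage_univ,
        ← Set.univ_prod_univ, Measure.prod_prod,
        withDensity_apply _ MeasurableSet.univ, Measure.restrict_univ,
        withDensity_apply _ MeasurableSet.univ, Measure.restrict_univ, hf_int, mul_one]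
      exact hφlint
    rwa [withDensity_apply _ MeasurableSet.univ, Measure.restrict_univ] at h0
  have hGae : ∀ᵐ u : Fin k → ℝ, G u ≠ ∞ :=
    (ae_lt_top hGm hGlint).mono fun u hu => hu.ne
  refine ⟨fun u => (G u).toReal, hGm.ennreal_toReal, ?_, ?_⟩
  · rw [hmap]
    exact (withDensity_congr_ae (hGae.mono fun u hu =>
      ENNReal.ofReal_toReal hu)).symm
  -- the pointwise identity on the positive orthant
  refine ae_of_all _ fun u hu => ?_
  set Su : Set (Fin k → ℝ) := {v : Fin k → ℝ | ∀ j, 0 < v j ∧ v j < u j} with hSudef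
  have hSum : MeasurableSet Su := by
    have h : Su = ⋂ j, (fun v : Fin k → ℝ => v j) ⁻¹' Ioo 0 (u j) := by
      ext v; simp [hSudef, mem_iInter, mem_Ioo]
    rw [h]
    exact MeasurableSet.iInter fun j => (measurable_pi_apply j) measurableSet_Ioo
  set K : (Fin k → ℝ) → ℝ := fun v =>
    (∏ j, (u j - v j) ^ (α j - 1) * v j ^ ζ j) * f v with hKdef
  have hKm : Measurable K := by
    rw [hKdef]; fun_prop
  set E : ℝ := ∏ j, Real.Gamma (ζ j + α j) /
      (Real.Gamma (ζ j) * Real.Gamma (α j)) * u j ^ (1 - ζ j - α j) with hEdef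
  have hE_nonneg : 0 ≤ E :=
    Finset.prod_nonneg fun j _ =>
      mul_nonneg (hC_nonneg j) (Real.rpow_nonneg (hu j).le _)
  have hHm : Measurable fun x : Fin k → ℝ =>
      φ' x * f' (fun j => x j * u j) * ENNReal.ofReal (∏ j, x j) := by
    apply Measurable.fun_mul
    · exact hφ'm.fun_mul (hf'm.comp (by fun_prop))
    · fun_prop
  have h1 := lintegral_eq_mul_comp_pi (fun j => (u j)⁻¹)
    (fun j => inv_ne_zero (hu j).ne') _ hHm
  have hpt : ∀ v : Fin k → ℝ,
      φ' (fun j => (u j)⁻¹ * v j) * f' (fun j => ((u j)⁻¹ * v j) * u j) *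
        ENNReal.ofReal (∏ j, (u j)⁻¹ * v j)
      = ENNReal.ofReal E * ENNReal.ofReal (Su.indicator K v) := by
    intro v
    have hv_eq : (fun j => ((u j)⁻¹ * v j) * u j) = v := by
      funext j
      rw [mul_comm ((u j)⁻¹) (v j), mul_assoc, inv_mul_cancel₀ (hu j).ne', mul_one]
    rw [hv_eq]
    by_cases hv : v ∈ Su
    · have hw : (fun j => (u j)⁻¹ * v j) ∈ S1 := by
        intro j
        refine ⟨mul_pos (inv_pos.2 (hu j)) (hv j).1, ?_⟩
        have h := (div_lt_one (hu j)).2 (hv j).2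
        rwa [div_eq_inv_mul] at h
      rw [indicator_of_mem hv, hφ'def]
      simp only []
      rw [hφrdef, indicator_of_mem hw]
      have hA_nonneg : 0 ≤ ∏ j, Real.Gamma (ζ j + α j) /
          (Real.Gamma (ζ j) * Real.Gamma (α j)) *
            (((u j)⁻¹ * v j) ^ (ζ j - 1) * (1 - (u j)⁻¹ * v j) ^ (α j - 1)) := by
        refine Finset.prod_nonneg fun j _ => mul_nonneg (hC_nonneg j) ?_
        refine mul_nonneg (Real.rpow_nonneg
          (mul_nonneg (inv_pos.2 (hu j)).le (hv j).1.le) _) (Real.rpow_nonneg ?_ _)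
        have h := (div_lt_one (hu j)).2 (hv j).2
        rw [div_eq_inv_mul] at h
        linarith
      rw [← ENNReal.ofReal_mul hA_nonneg,
        ← ENNReal.ofReal_mul (mul_nonneg hA_nonneg (hf_nonneg v)),
        ← ENNReal.ofReal_mul hE_nonneg]
      congr 1
      have hprod : (∏ j, Real.Gamma (ζ j + α j) /
          (Real.Gamma (ζ j) * Real.Gamma (α j)) *
            (((u j)⁻¹ * v j) ^ (ζ j - 1) * (1 - (u j)⁻¹ * v j) ^ (α j - 1))) *
          (∏ j, (u j)⁻¹ * v j)
          = E * ∏ j, (u j - v j) ^ (α j - 1) * v j ^ ζ j := by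
        rw [hEdef, ← Finset.prod_mul_distrib, ← Finset.prod_mul_distrib]
        refine Finset.prod_congr rfl fun j _ => ?_
        have h := coord_id (ζ j) (α j) (u j) (v j)
          (Real.Gamma (ζ j + α j) / (Real.Gamma (ζ j) * Real.Gamma (α j)))
          (hu j) (hv j).1 (hv j).2
        linear_combination h
      rw [hKdef]
      simp only []
      linear_combination (f v) * hprod
    · rw [indicator_of_notMem hv, ENNReal.ofReal_zero, mul_zero]
      obtain ⟨j0, hj0⟩ := not_forall.1 hv
      by_cases hvj : 0 < v j0
      · have hw : (fun j => (u j)⁻¹ * v j) ∉ S1 := by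
          intro hmem
          have h2 := (hmem j0).2
          have hle : u j0 ≤ v j0 := le_of_not_gt fun hlt => hj0 ⟨hvj, hlt⟩
          have h3 : (1:ℝ) ≤ (u j0)⁻¹ * v j0 := by
            rw [← div_eq_inv_mul]
            exact (one_le_div (hu j0)).2 hle
          linarith
        rw [hφ'def]
        simp only []
        rw [hφr_zero _ hw, ENNReal.ofReal_zero, zero_mul, zero_mul]
      · have hfv : f v = 0 := hf_supp v fun hall => hvj (hall j0)
        rw [hf'def]
        simp only []
        rw [hfv, ENNReal.ofReal_zero, mul_zero, zero_mul]
  have hGu : G u = ENNReal.ofReal ((∏ j, u j)⁻¹ * E) *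
      ∫⁻ v, ENNReal.ofReal (Su.indicator K v) := by
    rw [hGdef]
    simp only []
    rw [h1]
    simp only []
    rw [lintegral_congr hpt,
      lintegral_const_mul _ ((hKm.indicator hSum).ennreal_ofReal)]
    rw [show |∏ j, (u j)⁻¹| = (∏ j, u j)⁻¹ by
      rw [Finset.prod_inv_distrib, abs_inv,
        abs_of_pos (Finset.prod_pos fun j _ => hu j)]]
    rw [← mul_assoc, ← ENNReal.ofReal_mul (inv_nonneg.2 (Finset.prod_nonneg fun j _ => (hu j).le))]
  -- relate the Bochner integral in `kober1` to the lintegral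
  have hK_int : ∫ v in Su, K v
      = (∫⁻ v, ENNReal.ofReal (Su.indicator K v)).toReal := by
    rw [integral_eq_lintegral_of_nonneg_ae ?_ hKm.aestronglyMeasurable.restrict]
    · congr 1
      rw [← lintegral_indicator hSum]
      refine lintegral_congr fun v => ?_
      by_cases hv : v ∈ Su
      · rw [indicator_of_mem hv, indicator_of_mem hv]
      · rw [indicator_of_notMem hv, indicator_of_notMem hv, ENNReal.ofReal_zero]
    · filter_upwards [ae_restrict_mem hSum] with v hv
      show (0:ℝ) ≤ K v
      rw [hKdef]
      refine mul_nonneg (Finset.prod_nonneg fun j _ => mul_nonneg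
        (Real.rpow_nonneg (by linarith [(hv j).2]) _)
        (Real.rpow_nonneg (hv j).1.le _)) (hf_nonneg v)
  have hcoef : (∏ j, Real.Gamma (ζ j) / Real.Gamma (ζ j + α j)) *
      ((∏ j, u j)⁻¹ * E)
      = ∏ j, u j ^ (-ζ j - α j) / Real.Gamma (α j) := by
    rw [hEdef, ← Finset.prod_inv_distrib, ← Finset.prod_mul_distrib,
      ← Finset.prod_mul_distrib]
    refine Finset.prod_congr rfl fun j _ => ?_
    have hrw : u j ^ (1 - ζ j - α j) = u j * u j ^ (-ζ j - α j) := by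
      rw [show (1 - ζ j - α j : ℝ) = 1 + (-ζ j - α j) by ring,
        Real.rpow_add (hu j), Real.rpow_one]
    rw [hrw]
    have h1 := (hGamma_pos j).1.ne'
    have h2 := (hGamma_pos j).2.1.ne'
    have h3 := (hGamma_pos j).2.2.ne'
    have h4 := (hu j).ne'
    field_simp
  show (∏ j, Real.Gamma (ζ j) / Real.Gamma (ζ j + α j)) * (G u).toReal
      = kober1 ζ α f u
  rw [kober1, ← hSudef, ← hKdef, hK_int, hGu, ENNReal.toReal_mul,
    ENNReal.toReal_ofReal (mul_nonneg
      (inv_nonneg.2 (Finset.prod_nonneg fun j _ => (hu j).le)) hE_nonneg),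
    ← mul_assoc, hcoef]
end
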